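/- For all real numbers s > 0, p > 0 and α > 2, 2π ∫_0^∞ (1 - 1/(1 + s p x^{-α})) x dx = (s p)^{2/α} · ζ(α), where ζ(α) = (2π²/α) · csc(2π/α). Consequently, the Laplace transform of the total interference from a full-plane homogeneous PPP of intensity λ with transmit power p and Rayleigh fading is exp(-λ s^{2/α} p^{2/α} ζ(α)). -/

import Mathlib

open MeasureTheory Real Set

/-- ζ(α) = (2π²/α) · csc(2π/α). -/
noncomputable def zetaPL (α : ℝ) : ℝ :=
  (2 * Real.pi ^ 2 / α) * (Real.sin (2 * Real.pi / α))⁻¹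

lemma real_beta_reflect {a : ℝ} (ha : 0 < a) (ha1 : a < 1) :
    ∫ x in (0:ℝ)..1, x ^ (a-1) * (1-x) ^ (-a) = π / Real.sin (π * a) := by
  have h1 : Complex.betaIntegral a (1-a)
      = ((∫ x in (0:ℝ)..1, x ^ (a-1) * (1-x) ^ (-a) : ℝ) : ℂ) := by
    rw [Complex.betaIntegral, ← intervalIntegral.integral_ofReal]
    apply intervalIntegral.integral_congr
    intro x hx
    rw [uIcc_of_le (by norm_num : (0:ℝ) ≤ 1)] at hx
    have hx0 : 0 ≤ x := hx.1
    have hx1 : 0 ≤ 1 - x := by linarith [hx.2]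
    simp only []
    have e1 : ((a:ℂ) - 1) = ((a - 1 : ℝ) : ℂ) := by push_cast; ring
    have e2 : ((1:ℂ) - (a:ℂ) - 1) = ((-a : ℝ) : ℂ) := by push_cast; ring
    have e3 : ((1:ℂ) - (x:ℂ)) = ((1 - x : ℝ) : ℂ) := by push_cast; ring
    rw [Complex.ofReal_mul, e1, e2, e3, ← Complex.ofReal_cpow hx0, ← Complex.ofReal_cpow hx1]
  have h2 := Complex.Gamma_mul_Gamma_eq_betaIntegral
    (s := (a:ℂ)) (t := 1 - (a:ℂ)) (by simpa using ha) (by simp; linarith)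
  have hcoe : (1 : ℂ) - (a:ℂ) = ((1 - a : ℝ) : ℂ) := by push_cast; ring
  rw [h1] at h2
  have h3 : (a : ℂ) + (1 - (a:ℂ)) = 1 := by ring
  rw [h3, Complex.Gamma_one, one_mul, hcoe, Complex.Gamma_ofReal, Complex.Gamma_ofReal,
    ← Complex.ofReal_mul] at h2
  have h4 := Real.Gamma_mul_Gamma_one_sub a
  rw [h4] at h2
  exact_mod_cast h2.symm

lemma integral_rpow_div_one_add {a : ℝ} (ha : 0 < a) (ha1 : a < 1) :
    ∫ t in Ioi (0:ℝ), t ^ (a-1) / (1 + t) = π / Real.sin (π * a) := by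
  have himg : (fun u : ℝ => u / (1 - u)) '' Ioo 0 1 = Ioi 0 := by
    ext t
    constructor
    · rintro ⟨u, hu, rfl⟩
      exact div_pos hu.1 (by linarith [hu.2])
    · intro ht
      have ht0 : (0:ℝ) < t := ht
      refine ⟨t / (1 + t), ⟨div_pos ht0 (by linarith), ?_⟩, ?_⟩
      · rw [div_lt_one (by linarith)]; linarith
      · have h1t : (1:ℝ) + t ≠ 0 := by positivity
        field_simp
        ring
  have hderiv : ∀ u ∈ Ioo (0:ℝ) 1,
      HasDerivWithinAt (fun u : ℝ => u / (1 - u)) (((1 - u)^2)⁻¹) (Ioo 0 1) u := by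
    intro u hu
    have h1u : (1:ℝ) - u ≠ 0 := by rw [sub_ne_zero]; exact fun h => absurd h.symm (ne_of_lt hu.2)
    have := (hasDerivAt_id u).div ((hasDerivAt_id u).const_sub 1) h1u
    convert this.hasDerivWithinAt using 2
    · rfl
    · rfl
    · rfl
    simp only [id]
    field_simp
    ring
  have hinj : InjOn (fun u : ℝ => u / (1 - u)) (Ioo 0 1) := by
    intro u hu v hv h
    have h1u : (1:ℝ) - u ≠ 0 := by rw [sub_ne_zero]; exact fun h => absurd h.symm (ne_of_lt hu.2)
    have h1v : (1:ℝ) - v ≠ 0 := by rw [sub_ne_zero]; exact fun h => absurd h.symm (ne_of_lt hv.2)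
    field_simp at h
    nlinarith [h]
  rw [← himg, integral_image_eq_integral_abs_deriv_smul measurableSet_Ioo hderiv hinj
    (fun t => t ^ (a-1) / (1 + t))]
  have hcongr : ∀ u ∈ Ioo (0:ℝ) 1,
      |((1 - u)^2)⁻¹| • ((u / (1 - u)) ^ (a-1) / (1 + u / (1 - u)))
        = u ^ (a-1) * (1 - u) ^ (-a) := by
    intro u hu
    have hu0 : (0:ℝ) < u := hu.1
    have h1u : (0:ℝ) < 1 - u := by linarith [hu.2]
    have habs : |((1 - u)^2)⁻¹| = ((1 - u)^2)⁻¹ := abs_of_pos (by positivity)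
    have hq : 1 + u / (1 - u) = (1 - u)⁻¹ := by field_simp; ring
    rw [smul_eq_mul, habs, hq, Real.div_rpow hu0.le h1u.le]
    have key : (1 - u) ^ (-a) * ((1-u)^2 * (1 - u) ^ (a-1)) = 1 - u := by
      rw [sq, mul_comm ((1-u) * (1-u)), ← mul_assoc, ← Real.rpow_add h1u]
      have : -a + (a - 1) = -1 := by ring
      rw [this, Real.rpow_neg_one]
      field_simp
    have hne1 : ((1-u):ℝ) ^ (a-1) ≠ 0 := (Real.rpow_pos_of_pos h1u _).ne'
    have step : ((1 - u)^2)⁻¹ * (u ^ (a-1) / (1-u) ^ (a-1) / (1 - u)⁻¹)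
        = u ^ (a-1) * ((1 - u) / ((1-u)^2 * (1-u) ^ (a-1))) := by
      field_simp
    rw [step]
    congr 1
    rw [eq_comm, eq_div_iff (by positivity)]
    exact key
  rw [setIntegral_congr_fun measurableSet_Ioo hcongr, ← integral_Ioc_eq_integral_Ioo,
    ← intervalIntegral.integral_of_le (by norm_num : (0:ℝ) ≤ 1)]
  exact real_beta_reflect ha ha1

/-- For s > 0, p > 0, α > 2:
`2π ∫_0^∞ (1 - 1/(1 + s p x^{-α})) x dx = (s p)^{2/α} ζ(α)`, and consequently the
Laplace transform of the full-plane PPP interference with intensity λ is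
`exp(-λ s^{2/α} p^{2/α} ζ(α))`. -/
theorem full_plane_interference_laplace (s p α : ℝ)
    (hs : 0 < s) (hp : 0 < p) (hα : 2 < α) :
    (2 * Real.pi * ∫ x in Set.Ioi (0 : ℝ), (1 - 1 / (1 + s * p * x ^ (-α))) * x =
      (s * p) ^ (2 / α) * zetaPL α) ∧
    ∀ lam : ℝ, 0 < lam →
      Real.exp (-(lam *
          (2 * Real.pi * ∫ x in Set.Ioi (0 : ℝ), (1 - 1 / (1 + s * p * x ^ (-α))) * x))) =
        Real.exp (-(lam * s ^ (2 / α) * p ^ (2 / α) * zetaPL α)) := by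
  have hα0 : (0:ℝ) < α := by linarith
  set c := s * p with hc_def
  have hc : 0 < c := mul_pos hs hp
  set a := 2 / α with ha_def
  have ha : 0 < a := by positivity
  have ha1 : a < 1 := by rw [ha_def, div_lt_one hα0]; exact hα
  -- Step A: rewrite the integrand as a composition suitable for `t = x ^ α`
  have hA : ∀ x ∈ Ioi (0:ℝ), (1 - 1 / (1 + c * x ^ (-α))) * x
      = (α * x ^ (α - 1)) • ((fun t => (c / α) * (t ^ (a - 1) / (t + c))) (x ^ α)) := by
    intro x hx
    have hx0 : (0:ℝ) < x := hx
    have hxa : (0:ℝ) < x ^ α := Real.rpow_pos_of_pos hx0 α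
    have hxna : x ^ (-α) = (x ^ α)⁻¹ := Real.rpow_neg hx0.le α
    have h1 : (x ^ α) ^ (a - 1) = x ^ (2 - α) := by
      rw [← Real.rpow_mul hx0.le]
      congr 1
      rw [ha_def]
      field_simp
    have hL : 1 - 1 / (1 + c * (x ^ α)⁻¹) = c / (x ^ α + c) := by
      have hd : (0:ℝ) < 1 + c * (x ^ α)⁻¹ := by positivity
      field_simp
      ring
    have key : x ^ (α - 1) * x ^ (2 - α) = x := by
      rw [← Real.rpow_add hx0]
      norm_num
    simp only [smul_eq_mul, h1]
    rw [hxna, hL]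
    have hrhs : α * x ^ (α - 1) * ((c / α) * (x ^ (2 - α) / (x ^ α + c)))
        = c * (x ^ (α - 1) * x ^ (2 - α)) / (x ^ α + c) := by
      field_simp
    rw [hrhs, key]
    ring
  have hB := integral_comp_rpow_Ioi_of_pos
    (g := fun t => (c / α) * (t ^ (a - 1) / (t + c))) hα0
  rw [setIntegral_congr_fun measurableSet_Ioi hA, hB]
  -- Step B: scaling t = c * u
  have hscale := integral_comp_mul_left_Ioi
    (fun t => (c / α) * (t ^ (a - 1) / (t + c))) 0 hc
  rw [mul_zero] at hscale
  have hcongr2 : ∀ u ∈ Ioi (0:ℝ),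
      (fun t => (c / α) * (t ^ (a - 1) / (t + c))) (c * u)
        = (c ^ (a - 1) / α) * (u ^ (a - 1) / (1 + u)) := by
    intro u hu
    have hu0 : (0:ℝ) < u := hu
    simp only []
    rw [Real.mul_rpow hc.le hu0.le]
    have h1u : (0:ℝ) < 1 + u := by linarith
    field_simp
    ring
  rw [setIntegral_congr_fun measurableSet_Ioi hcongr2, integral_const_mul,
    integral_rpow_div_one_add ha ha1] at hscale
  have hI : (∫ t in Ioi (0:ℝ), (c / α) * (t ^ (a - 1) / (t + c)))
      = c * ((c ^ (a - 1) / α) * (π / Real.sin (π * a))) := by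
    simp only [smul_eq_mul] at hscale
    rw [hscale, ← mul_assoc, mul_inv_cancel₀ hc.ne', one_mul]
  rw [hI]
  have hca : c * c ^ (a - 1) = c ^ a := by
    nth_rewrite 1 [← Real.rpow_one c]
    rw [← Real.rpow_add hc]
    norm_num
  have hsin' : π * a = 2 * π / α := by rw [ha_def]; ring
  have first : 2 * π * (c * ((c ^ (a - 1) / α) * (π / Real.sin (π * a))))
      = c ^ a * zetaPL α := by
    rw [zetaPL, hsin']
    rw [show 2 * π * (c * ((c ^ (a - 1) / α) * (π / Real.sin (2 * π / α))))
        = (c * c ^ (a - 1)) * (2 * π ^ 2 / α * (Real.sin (2 * π / α))⁻¹) by ring, hca]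
  refine ⟨first, ?_⟩
  intro lam _
  rw [first]
  congr 1
  rw [hc_def, Real.mul_rpow hs.le hp.le]
  ring
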